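/- Let S be a countable iLWF inverse semigroup whose set of idempotents {e ∈ S : e*e = e} is finite. Then S is iLEF: for every finite subset H of S there exist a finite inverse semigroup F and an injective function f : H → F such that for all x, y ∈ H with x*y ∈ H, f(x*y) = f(x)*f(y). -/

import Mathlib

/-- An inverse semigroup: a semigroup with an inverse operation `x ↦ x⁻¹` such that
`x⁻¹` is the unique element `y` with `x * y * x = x` and `y * x * y = y`. -/
class InverseSemigroup (S : Type*) extends Semigroup S, Inv S where
  mul_inv_mul : ∀ x : S, x * x⁻¹ * x = x
  inv_mul_inv : ∀ x : S, x⁻¹ * x * x⁻¹ = x⁻¹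
  inv_unique : ∀ x y : S, x * y * x = x → y * x * y = y → y = x⁻¹

/-- An inverse semigroup `S` is iLWF if for every finite subset `H` of `S` there exist a
finite inverse semigroup `D` and a function `d : D → S` such that `H ⊆ d(D)` and
`d (x' * y') = d x' * d y'` whenever `d x', d y' ∈ H`. -/
def IsiLWF (S : Type*) [InverseSemigroup S] : Prop :=
  ∀ H : Finset S, ∃ (D : Type) (_ : InverseSemigroup D) (_ : Fintype D) (d : D → S),
    (↑H ⊆ Set.range d) ∧
      ∀ x' y' : D, d x' ∈ H → d y' ∈ H → d (x' * y') = d x' * d y'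

/-- An inverse semigroup `S` is iLEF if for every finite subset `H` of `S` there exist a
finite inverse semigroup `F` and a function `f : S → F` injective on `H` such that
`f (x * y) = f x * f y` whenever `x, y, x * y ∈ H`. -/
def IsiLEF (S : Type*) [InverseSemigroup S] : Prop :=
  ∀ H : Finset S, ∃ (F : Type) (_ : InverseSemigroup F) (_ : Fintype F) (f : S → F),
    Set.InjOn f ↑H ∧
      ∀ x ∈ H, ∀ y ∈ H, x * y ∈ H → f (x * y) = f x * f y
namespace ISG

variable {S : Type*} [InverseSemigroup S]

lemma mim (x : S) : x * x⁻¹ * x = x := InverseSemigroup.mul_inv_mul x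
lemma imi (x : S) : x⁻¹ * x * x⁻¹ = x⁻¹ := InverseSemigroup.inv_mul_inv x
lemma inv_eq {x y : S} (h1 : x * y * x = x) (h2 : y * x * y = y) : y = x⁻¹ :=
  InverseSemigroup.inv_unique x y h1 h2

lemma crw {a b c : S} (h : a * b = c) (z : S) : a * (b * z) = c * z := by
  rw [← mul_assoc, h]

lemma mulr {u v : S} (h : u = v) (z : S) : u * z = v * z := by rw [h]

lemma inv_inv (x : S) : (x⁻¹)⁻¹ = x :=
  (inv_eq (imi x) (mim x)).symm

lemma idem_inv {e : S} (he : e * e = e) : e⁻¹ = e :=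
  (inv_eq (by rw [he, he]) (by rw [he, he]) : e = e⁻¹).symm

lemma mul_inv_idem (x : S) : (x * x⁻¹) * (x * x⁻¹) = x * x⁻¹ := by
  have h := mulr (mim x) x⁻¹
  simp only [mul_assoc] at h ⊢
  exact h

lemma inv_mul_idem (x : S) : (x⁻¹ * x) * (x⁻¹ * x) = x⁻¹ * x := by
  have := mul_inv_idem (x⁻¹)
  rwa [inv_inv] at this

/-- products of idempotents are idempotent -/
lemma idem_mul {e f : S} (he : e * e = e) (hf : f * f = f) :
    (e * f) * (e * f) = e * f := by
  set x := (e * f)⁻¹ with hx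
  have hx1 : (e * f) * x * (e * f) = e * f := mim (e * f)
  have hx2 : x * (e * f) * x = x := imi (e * f)
  have hx1r : e * (f * (x * (e * f))) = e * f := by
    have := hx1; simp only [mul_assoc] at this; exact this
  have h1 : (e * f) * (f * x * e) * (e * f) = e * f := by
    show e * f * (f * x * e) * (e * f) = e * f
    simp only [mul_assoc]
    rw [crw hf, crw he]
    exact hx1r
  have h2x : x * (e * (f * (x * e))) = x * e := by
    have := mulr hx2 e; simp only [mul_assoc] at this; exact this
  have h2 : (f * x * e) * (e * f) * (f * x * e) = f * x * e := by
    simp only [mul_assoc]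
    rw [crw he, crw hf, h2x]
  have hfxe : f * x * e = x := inv_eq h1 h2 |>.trans hx.symm
  have hfxer : f * (x * e) = x := by
    have := hfxe; simp only [mul_assoc] at this; exact this
  have hxidem : x * x = x := by
    conv_lhs => rw [← hfxe]
    simp only [mul_assoc]
    rw [h2x, ← mul_assoc, hfxe]
  have hef : e * f = x := by
    have h3 : x * (e * f) * x = x := hx2
    have h4 : (e * f) * x * (e * f) = e * f := hx1
    have := inv_eq h3 h4
    rw [idem_inv hxidem] at this
    exact this
  rw [hef, hxidem]

lemma idem_comm {e f : S} (he : e * e = e) (hf : f * f = f) :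
    e * f = f * e := by
  have hef : (e * f) * (e * f) = e * f := idem_mul he hf
  have hfe : (f * e) * (f * e) = f * e := idem_mul hf he
  have hefr : e * (f * (e * f)) = e * f := by
    have := hef; simp only [mul_assoc] at this; exact this
  have hfer : f * (e * (f * e)) = f * e := by
    have := hfe; simp only [mul_assoc] at this; exact this
  have h1 : (e * f) * (f * e) * (e * f) = e * f := by
    simp only [mul_assoc]; rw [crw hf, crw he]; exact hefr
  have h2 : (f * e) * (e * f) * (f * e) = f * e := by
    simp only [mul_assoc]; rw [crw he, crw hf]; exact hfer
  have := inv_eq h1 h2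
  rw [idem_inv hef] at this
  exact this.symm

lemma mul_inv_rev (x y : S) : (x * y)⁻¹ = y⁻¹ * x⁻¹ := by
  have hc : (y * y⁻¹) * (x⁻¹ * x) = (x⁻¹ * x) * (y * y⁻¹) :=
    idem_comm (mul_inv_idem y) (inv_mul_idem x)
  have mimyr : y * (y⁻¹ * y) = y := by
    have := mim y; simp only [mul_assoc] at this; exact this
  have imixr : x⁻¹ * (x * x⁻¹) = x⁻¹ := by
    have := imi x; simp only [mul_assoc] at this; exact this
  have h1 : (x * y) * (y⁻¹ * x⁻¹) * (x * y) = x * y := by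
    have e1 : (x * y) * (y⁻¹ * x⁻¹) * (x * y) = x * (((y * y⁻¹) * (x⁻¹ * x)) * y) := by
      simp only [mul_assoc]
    rw [e1, hc]
    have e2 : x * (((x⁻¹ * x) * (y * y⁻¹)) * y) = (x * x⁻¹ * x) * (y * (y⁻¹ * y)) := by
      simp only [mul_assoc]
    rw [e2, mim, mimyr]
  have h2 : (y⁻¹ * x⁻¹) * (x * y) * (y⁻¹ * x⁻¹) = y⁻¹ * x⁻¹ := by
    have e1 : (y⁻¹ * x⁻¹) * (x * y) * (y⁻¹ * x⁻¹) = y⁻¹ * (((x⁻¹ * x) * (y * y⁻¹)) * x⁻¹) := by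
      simp only [mul_assoc]
    rw [e1, ← hc]
    have e2 : y⁻¹ * (((y * y⁻¹) * (x⁻¹ * x)) * x⁻¹) = (y⁻¹ * y * y⁻¹) * (x⁻¹ * (x * x⁻¹)) := by
      simp only [mul_assoc]
    rw [e2, imi, imixr]
  exact (inv_eq h1 h2).symm

/-- conjugate of an idempotent is idempotent -/
lemma conj_idem {f : S} (hf : f * f = f) (x : S) :
    (x⁻¹ * f * x) * (x⁻¹ * f * x) = x⁻¹ * f * x := by
  have hxx : (x * x⁻¹) * (x * x⁻¹) = x * x⁻¹ := mul_inv_idem x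
  have hcomm : f * (x * x⁻¹) = (x * x⁻¹) * f := idem_comm hf hxx
  have e1 : (x⁻¹ * f * x) * (x⁻¹ * f * x) = x⁻¹ * ((f * (x * x⁻¹)) * (f * x)) := by
    simp only [mul_assoc]
  rw [e1, hcomm]
  have e2 : x⁻¹ * (((x * x⁻¹) * f) * (f * x)) = x⁻¹ * (x * (x⁻¹ * ((f * f) * x))) := by
    simp only [mul_assoc]
  rw [e2, hf]
  have e3 : x⁻¹ * (x * (x⁻¹ * (f * x))) = (x⁻¹ * x * x⁻¹) * (f * x) := by
    simp only [mul_assoc]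
  rw [e3, imi, ← mul_assoc]

end ISG

namespace ISG

variable {S : Type*} [InverseSemigroup S]

lemma conj_back {f x : S} (hf : f * f = f) (hle : f * (x * x⁻¹) = f) :
    x * (x⁻¹ * f * x) * x⁻¹ = f := by
  have ha : (x * x⁻¹) * (x * x⁻¹) = x * x⁻¹ := mul_inv_idem x
  have e1 : x * (x⁻¹ * f * x) * x⁻¹ = (x * x⁻¹) * (f * (x * x⁻¹)) := by
    simp only [mul_assoc]
  rw [e1, idem_comm hf ha]
  rw [crw ha f, idem_comm ha hf, hle]

lemma fx_eq {f x : S} (hf : f * f = f) (hle : f * (x * x⁻¹) = f) :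
    x * (x⁻¹ * f * x) = f * x := by
  have e1 : x * (x⁻¹ * f * x) = ((x * x⁻¹) * f) * x := by simp only [mul_assoc]
  rw [e1, idem_comm (mul_inv_idem x) hf, mul_assoc f, ← mul_assoc f, hle]

lemma L1a {f x y : S} (hf : f * f = f) (h1 : f * (x * x⁻¹) = f)
    (h2 : (x⁻¹ * f * x) * (y * y⁻¹) = x⁻¹ * f * x) :
    f * ((x * y) * (x * y)⁻¹) = f := by
  rw [mul_inv_rev]
  have e1 : f * ((x * y) * (y⁻¹ * x⁻¹)) = (f * x) * ((y * y⁻¹) * x⁻¹) := by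
    simp only [mul_assoc]
  rw [e1, ← fx_eq hf h1]
  have e2 : (x * (x⁻¹ * f * x)) * ((y * y⁻¹) * x⁻¹)
      = x * (((x⁻¹ * f * x) * (y * y⁻¹)) * x⁻¹) := by simp only [mul_assoc]
  rw [e2, h2]
  have e3 : x * ((x⁻¹ * f * x) * x⁻¹) = x * (x⁻¹ * f * x) * x⁻¹ := (mul_assoc _ _ _).symm
  rw [e3, conj_back hf h1]

lemma L1b {f x y : S} (hf : f * f = f) (h : f * ((x * y) * (x * y)⁻¹) = f) :
    f * (x * x⁻¹) = f := by
  have hc : (y * y⁻¹) * (x⁻¹ * x) = (x⁻¹ * x) * (y * y⁻¹) :=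
    idem_comm (mul_inv_idem y) (inv_mul_idem x)
  have hA : ((x * y) * (x * y)⁻¹) * (x * x⁻¹) = (x * y) * (x * y)⁻¹ := by
    rw [mul_inv_rev]
    have e1 : ((x * y) * (y⁻¹ * x⁻¹)) * (x * x⁻¹) = x * (((y * y⁻¹) * (x⁻¹ * x)) * x⁻¹) := by
      simp only [mul_assoc]
    rw [e1, hc]
    have e2 : x * (((x⁻¹ * x) * (y * y⁻¹)) * x⁻¹) = (x * x⁻¹ * x) * ((y * y⁻¹) * x⁻¹) := by
      simp only [mul_assoc]
    rw [e2, mim]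
    simp only [mul_assoc]
  calc f * (x * x⁻¹) = (f * ((x * y) * (x * y)⁻¹)) * (x * x⁻¹) := by rw [h]
  _ = f * (((x * y) * (x * y)⁻¹) * (x * x⁻¹)) := by rw [mul_assoc]
  _ = f * ((x * y) * (x * y)⁻¹) := by rw [hA]
  _ = f := h

lemma L1c {f x y : S} (hf : f * f = f) (h : f * ((x * y) * (x * y)⁻¹) = f) :
    (x⁻¹ * f * x) * (y * y⁻¹) = x⁻¹ * f * x := by
  have hstar : (x⁻¹ * f * x) * ((y * y⁻¹) * (x⁻¹ * x)) = x⁻¹ * f * x := by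
    have e1 : x⁻¹ * (f * ((x * y) * (y⁻¹ * x⁻¹))) * x
        = (x⁻¹ * f * x) * ((y * y⁻¹) * (x⁻¹ * x)) := by simp only [mul_assoc]
    rw [← e1]
    rw [show (x*y) * (y⁻¹*x⁻¹) = (x*y)*(x*y)⁻¹ by rw [mul_inv_rev], h]
  set B := x⁻¹ * f * x
  set u := y * y⁻¹
  set v := x⁻¹ * x
  have hu : u * u = u := mul_inv_idem y
  have hv : v * v = v := inv_mul_idem x
  have hcomm : u * v = v * u := idem_comm hu hv
  calc B * u = (B * (u * v)) * u := by rw [hstar]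
  _ = B * (u * (v * u)) := by simp only [mul_assoc]
  _ = B * (u * (u * v)) := by rw [← hcomm]
  _ = B * ((u * u) * v) := by rw [← mul_assoc u u v]
  _ = B * (u * v) := by rw [hu]
  _ = B := hstar

lemma col_comp (f x y : S) : (x * y)⁻¹ * f * (x * y) = y⁻¹ * (x⁻¹ * f * x) * y := by
  rw [mul_inv_rev]; simp only [mul_assoc]

/-- membership in the maximal subgroup at `e` -/
def Ge (e x : S) : Prop := x⁻¹ * x = e ∧ x * x⁻¹ = e

lemma Ge_mul {e x y : S} (hx : Ge e x) (hy : Ge e y) : Ge e (x * y) := by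
  constructor
  · rw [mul_inv_rev]
    have e1 : y⁻¹ * x⁻¹ * (x * y) = y⁻¹ * ((x⁻¹ * x) * y) := by simp only [mul_assoc]
    rw [e1, hx.1]
    conv_lhs => rw [← hy.2]
    have e2 : y⁻¹ * ((y * y⁻¹) * y) = (y⁻¹ * y) * (y⁻¹ * y) := by simp only [mul_assoc]
    rw [e2, inv_mul_idem y]
    exact hy.1
  · rw [mul_inv_rev]
    have e1 : x * y * (y⁻¹ * x⁻¹) = x * ((y * y⁻¹) * x⁻¹) := by simp only [mul_assoc]
    rw [e1, hy.2]
    conv_lhs => rw [← hx.1]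
    have e2 : x * ((x⁻¹ * x) * x⁻¹) = (x * x⁻¹) * (x * x⁻¹) := by simp only [mul_assoc]
    rw [e2, mul_inv_idem x]
    exact hx.2

lemma Ge_e {e : S} (he : e * e = e) : Ge e e := by
  constructor <;> rw [idem_inv he] <;> exact he

lemma Ge_mul_e {e x : S} (hx : Ge e x) : x * e = x ∧ e * x = x := by
  constructor
  · rw [← hx.1, ← mul_assoc, mim]
  · rw [← hx.2, mim]

lemma Ge_cancel_r {e A B r : S} (hA : Ge e A) (hB : Ge e B) (hr : r * r⁻¹ = e)
    (h : A * r = B * r) : A = B := by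
  have : A * e = B * e := by
    rw [← hr, ← mul_assoc, ← mul_assoc, h]
  rwa [(Ge_mul_e hA).1, (Ge_mul_e hB).1] at this

/-- the `G_e`-part of an element `s` of an `H`-class with representative `r` -/
lemma Hclass_part {e g s r : S} (hs1 : s * s⁻¹ = e) (hs2 : s⁻¹ * s = g)
    (hr1 : r * r⁻¹ = e) (hr2 : r⁻¹ * r = g) :
    Ge e (s * r⁻¹) ∧ (s * r⁻¹) * r = s := by
  refine ⟨⟨?_, ?_⟩, ?_⟩
  · rw [mul_inv_rev, inv_inv]
    have e1 : r * s⁻¹ * (s * r⁻¹) = r * ((s⁻¹ * s) * r⁻¹) := by simp only [mul_assoc]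
    rw [e1, hs2, ← hr2]
    have e2 : r * ((r⁻¹ * r) * r⁻¹) = (r * r⁻¹) * (r * r⁻¹) := by simp only [mul_assoc]
    rw [e2, mul_inv_idem r, hr1]
  · rw [mul_inv_rev, inv_inv]
    have e1 : s * r⁻¹ * (r * s⁻¹) = s * ((r⁻¹ * r) * s⁻¹) := by simp only [mul_assoc]
    rw [e1, hr2, ← hs2]
    have e2 : s * ((s⁻¹ * s) * s⁻¹) = (s * s⁻¹) * (s * s⁻¹) := by simp only [mul_assoc]
    rw [e2, mul_inv_idem s, hs1]
  · rw [mul_assoc, hr2, ← hs2, ← mul_assoc, mim]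

/-- data for `r * s` where `r` is the `H`-class representative of column `f` and
`f` is below the domain of `s`. -/
lemma rep_mul {e f s r : S} (hr1 : r * r⁻¹ = e) (hr2 : r⁻¹ * r = f)
    (hle : f * (s * s⁻¹) = f) :
    (r * s) * (r * s)⁻¹ = e ∧ (r * s)⁻¹ * (r * s) = s⁻¹ * f * s := by
  have hrf : r * f = r := by rw [← hr2, ← mul_assoc, mim]
  constructor
  · rw [mul_inv_rev]
    have e1 : r * s * (s⁻¹ * r⁻¹) = (r * f) * ((s * s⁻¹) * r⁻¹) := by
      rw [hrf]; simp only [mul_assoc]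
    rw [e1]
    have e2 : (r * f) * ((s * s⁻¹) * r⁻¹) = r * ((f * (s * s⁻¹)) * r⁻¹) := by
      simp only [mul_assoc]
    rw [e2, hle, ← hr2]
    have e3 : r * ((r⁻¹ * r) * r⁻¹) = (r * r⁻¹) * (r * r⁻¹) := by simp only [mul_assoc]
    rw [e3, mul_inv_idem r, hr1]
  · rw [mul_inv_rev]
    have e1 : s⁻¹ * r⁻¹ * (r * s) = s⁻¹ * ((r⁻¹ * r) * s) := by simp only [mul_assoc]
    rw [e1, hr2, ← mul_assoc]

end ISG

namespace ISG

/-- partial bijections on `X` -/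
def PB (X : Type*) : Type _ :=
  {f : X → Option X // ∀ a b c, f a = some c → f b = some c → a = b}

namespace PB

variable {X : Type*}

instance : Mul (PB X) :=
  ⟨fun f g => ⟨fun a => (f.1 a).bind g.1, by
    intro a b c hab hbc
    dsimp only at hab hbc
    rcases hfa : f.1 a with _ | a1
    · rw [hfa] at hab; exact absurd hab (by simp)
    rcases hfb : f.1 b with _ | b1
    · rw [hfb] at hbc; exact absurd hbc (by simp)
    rw [hfa] at hab; rw [hfb] at hbc
    simp only [Option.bind_some] at hab hbc
    have : a1 = b1 := g.2 a1 b1 c hab hbc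
    exact f.2 a b b1 (by rw [hfa, this]) hfb⟩⟩

lemma mul_def (f g : PB X) (a : X) : (f * g).1 a = (f.1 a).bind g.1 := rfl

open Classical in
noncomputable def pinv (f : PB X) : X → Option X := fun b =>
  if h : ∃ a, f.1 a = some b then some h.choose else none

lemma pinv_some {f : PB X} {a b : X} (h : f.1 a = some b) : pinv f b = some a := by
  unfold pinv
  rw [dif_pos ⟨a, h⟩]
  exact congrArg some (f.2 _ _ _ (⟨a, h⟩ : ∃ x, f.1 x = some b).choose_spec h)

lemma pinv_none {f : PB X} {b : X} (h : ¬ ∃ a, f.1 a = some b) : pinv f b = none := by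
  unfold pinv; rw [dif_neg h]

lemma pinv_spec {f : PB X} {a b : X} : pinv f b = some a ↔ f.1 a = some b := by
  constructor
  · intro h
    by_cases hb : ∃ x, f.1 x = some b
    · obtain ⟨x, hx⟩ := hb
      have := pinv_some hx
      rw [this] at h
      rw [Option.some_inj] at h
      rw [← h]; exact hx
    · rw [pinv_none hb] at h; exact absurd h (by simp)
  · exact pinv_some

noncomputable instance : Inv (PB X) :=
  ⟨fun f => ⟨pinv f, by
    intro a b c hab hbc
    have h1 : f.1 c = some a := pinv_spec.mp hab
    have h2 : f.1 c = some b := pinv_spec.mp hbc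
    rw [h1] at h2; exact Option.some_inj.mp h2⟩⟩

lemma inv_spec {f : PB X} {a b : X} : (f⁻¹).1 b = some a ↔ f.1 a = some b := pinv_spec

lemma inv_none {f : PB X} {b : X} (h : ¬ ∃ a, f.1 a = some b) : (f⁻¹).1 b = none :=
  pinv_none h

noncomputable instance instISG : InverseSemigroup (PB X) where
  mul_assoc f g h := by
    apply Subtype.ext; funext a
    show ((f.1 a).bind g.1).bind h.1 = (f.1 a).bind (fun x => (g.1 x).bind h.1)
    rcases f.1 a with _ | a1 <;> rfl
  mul_inv_mul f := by
    apply Subtype.ext; funext a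
    show ((f.1 a).bind (f⁻¹).1).bind f.1 = f.1 a
    rcases hfa : f.1 a with _ | b
    · rfl
    · have hinv : (f⁻¹).1 b = some a := inv_spec.mpr hfa
      show ((some b).bind (f⁻¹).1).bind f.1 = some b
      rw [Option.bind_some, hinv, Option.bind_some, hfa]
  inv_mul_inv f := by
    apply Subtype.ext; funext b
    show (((f⁻¹).1 b).bind f.1).bind (f⁻¹).1 = (f⁻¹).1 b
    rcases hb : (f⁻¹).1 b with _ | a
    · rfl
    · have hfa : f.1 a = some b := inv_spec.mp hb
      show ((some a).bind f.1).bind (f⁻¹).1 = some a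
      rw [Option.bind_some, hfa, Option.bind_some, hb]
  inv_unique f g h1 h2 := by
    apply Subtype.ext; funext b
    show g.1 b = (f⁻¹).1 b
    have key1 : ∀ u : X, ((f.1 u).bind g.1).bind f.1 = f.1 u := fun u =>
      congrFun (congrArg Subtype.val h1) u
    have key2 : ∀ u : X, ((g.1 u).bind f.1).bind g.1 = g.1 u := fun u =>
      congrFun (congrArg Subtype.val h2) u
    rcases hb : (f⁻¹).1 b with _ | a
    · -- show g.1 b = none
      by_contra hne
      rcases hgb : g.1 b with _ | c
      · exact hne hgb
      · have h2b := key2 b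
        rw [hgb, Option.bind_some] at h2b
        rcases hfc : f.1 c with _ | d
        · rw [hfc] at h2b
          exact absurd h2b (by simp)
        · rw [hfc, Option.bind_some] at h2b
          -- h2b : g.1 d = some c ; g.1 b = some c so d = b
          have hdb : d = b := g.2 d b c h2b hgb
          rw [hdb] at hfc
          -- hfc : f.1 c = some b contradicts hb : (f⁻¹).1 b = none
          have := inv_spec.mpr hfc
          rw [hb] at this
          exact absurd this (by simp)
    · -- hb : f⁻¹ b = some a; f a = some b; show g.1 b = some a
      have hfa : f.1 a = some b := inv_spec.mp hb
      have h1a := key1 a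
      rw [hfa, Option.bind_some] at h1a
      rcases hgb : g.1 b with _ | c
      · rw [hgb] at h1a
        exact absurd h1a (by simp)
      · rw [hgb, Option.bind_some] at h1a
        -- h1a : f.1 c = some b
        have : c = a := f.2 c a b h1a hfa
        rw [this]

noncomputable instance instFintypePB [Fintype X] : Fintype (PB X) := by
  classical
  exact Fintype.ofInjective (Subtype.val : PB X → (X → Option X)) Subtype.val_injective

end PB

/-- pointwise inverse semigroup structure on Pi types -/
noncomputable instance instPiISG {ι : Type*} (β : ι → Type*) [∀ i, InverseSemigroup (β i)] :
    InverseSemigroup (∀ i, β i) where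
  mul f g := fun i => f i * g i
  mul_assoc f g h := funext fun i => mul_assoc (f i) (g i) (h i)
  inv f := fun i => (f i)⁻¹
  mul_inv_mul f := funext fun i => mim (f i)
  inv_mul_inv f := funext fun i => imi (f i)
  inv_unique f g h1 h2 := funext fun i =>
    InverseSemigroup.inv_unique (f i) (g i) (congrFun h1 i) (congrFun h2 i)

/-- transport an inverse semigroup structure along an equiv -/
noncomputable def transportISG {α : Type*} {β : Type*} (E : β ≃ α) [InverseSemigroup α] :
    InverseSemigroup β where
  mul a b := E.symm (E a * E b)
  mul_assoc a b c := by
    show E.symm (E (E.symm (E a * E b)) * E c) = E.symm (E a * E (E.symm (E b * E c)))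
    simp only [Equiv.apply_symm_apply]
    rw [mul_assoc]
  inv a := E.symm (E a)⁻¹
  mul_inv_mul a := by
    show E.symm (E (E.symm (E a * E (E.symm (E a)⁻¹))) * E a) = a
    simp only [Equiv.apply_symm_apply]
    rw [show E a * (E a)⁻¹ * E a = E a from mim (E a), Equiv.symm_apply_apply]
  inv_mul_inv a := by
    show E.symm (E (E.symm (E (E.symm (E a)⁻¹) * E a)) * E (E.symm (E a)⁻¹)) =
      E.symm (E a)⁻¹
    simp only [Equiv.apply_symm_apply]
    rw [show (E a)⁻¹ * E a * (E a)⁻¹ = (E a)⁻¹ from imi (E a)]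
  inv_unique x y h1 h2 := by
    show y = E.symm (E x)⁻¹
    have h1a : E.symm (E (E.symm (E x * E y)) * E x) = x := h1
    have h2a : E.symm (E (E.symm (E y * E x)) * E y) = y := h2
    have h1' : E x * E y * E x = E x := by
      have := congrArg E h1a
      simpa only [Equiv.apply_symm_apply] using this
    have h2' : E y * E x * E y = E y := by
      have := congrArg E h2a
      simpa only [Equiv.apply_symm_apply] using this
    have := inv_eq h1' h2'
    rw [← this, Equiv.symm_apply_apply]

lemma exists_package (α : Type*) [InverseSemigroup α] [Fintype α] :
    ∃ (F : Type) (_ : InverseSemigroup F) (_ : Fintype F) (φ : α → F),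
      Function.Injective φ ∧ ∀ a b : α, φ (a * b) = φ a * φ b := by
  classical
  let E : Fin (Fintype.card α) ≃ α := (Fintype.equivFin α).symm
  letI iF : InverseSemigroup (Fin (Fintype.card α)) := transportISG E
  refine ⟨Fin (Fintype.card α), iF, inferInstance, fun a => E.symm a, Equiv.injective _, ?_⟩
  intro a b
  show E.symm (a * b) = E.symm (E (E.symm a) * E (E.symm b))
  rw [Equiv.apply_symm_apply, Equiv.apply_symm_apply]

/-- powers in a semigroup: `spow a n = a^(n+1)` -/
def spow {T : Type*} [Semigroup T] (a : T) : ℕ → T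
  | 0 => a
  | n + 1 => spow a n * a

lemma spow_add {T : Type*} [Semigroup T] (a : T) (m n : ℕ) :
    spow a m * spow a n = spow a (m + n + 1) := by
  induction n with
  | zero => rfl
  | succ k ih =>
    show spow a m * (spow a k * a) = spow a (m + k + 1 + 1)
    rw [← mul_assoc, ih]
    rfl

lemma spow_comm {T : Type*} [Semigroup T] (a : T) (n : ℕ) :
    spow a n * a = a * spow a n := by
  induction n with
  | zero => rfl
  | succ k ih =>
    show spow a k * a * a = a * (spow a k * a)
    rw [← mul_assoc, ih]

/-- in a finite semigroup some `spow` is idempotent -/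
lemma exists_idem_spow {T : Type*} [Semigroup T] [Finite T] (a : T) :
    ∃ n, spow a n * spow a n = spow a n := by
  obtain ⟨i, j, hne, hij⟩ := Finite.exists_ne_map_eq_of_infinite (fun n : ℕ => spow a n)
  wlog hlt : i < j generalizing i j
  · exact this j i (Ne.symm hne) hij.symm (by omega)
  set r := j - i with hr
  have hr1 : 1 ≤ r := by omega
  have hjr : j = i + r := by omega
  have step : ∀ m, i ≤ m → spow a m = spow a (m + r) := by
    intro m hm
    induction m with
    | zero =>
      have hi0 : i = 0 := by omega
      rw [hi0] at hij hjr
      rw [← hjr]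
      simpa [hi0] using hij
    | succ k ih =>
      by_cases hk : i ≤ k
      · have hidx : k + 1 + r = (k + r) + 1 := by omega
        rw [hidx]
        show spow a k * a = spow a (k + r) * a
        rw [ih hk]
      · have hik : i = k + 1 := by omega
        rw [hik] at hij hjr
        rw [← hjr]
        exact hij
  have steps : ∀ c m, i ≤ m → spow a m = spow a (m + c * r) := by
    intro c
    induction c with
    | zero => intro m _; simp
    | succ k ih =>
      intro m hm
      rw [ih m hm, step (m + k * r) (by omega)]
      congr 1; ring
  have hge : i + 1 ≤ (i + 1) * r := by
    calc i + 1 = (i + 1) * 1 := by ring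
    _ ≤ (i + 1) * r := Nat.mul_le_mul_left _ hr1
  refine ⟨(i + 1) * r - 1, ?_⟩
  rw [spow_add]
  have h1 : i ≤ (i + 1) * r - 1 := by omega
  have h2 : ((i + 1) * r - 1) + ((i + 1) * r - 1) + 1 = ((i + 1) * r - 1) + (i + 1) * r := by
    omega
  rw [h2, ← steps (i + 1) ((i + 1) * r - 1) h1]

end ISG

namespace ISG

variable {S : Type*} [InverseSemigroup S]

lemma group_part (hS : IsiLWF S) (e : S) (he : e * e = e)
    (W : Finset S) (hWe : ∀ w ∈ W, w⁻¹ * w = e ∧ w * w⁻¹ = e) :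
    ∃ (Q : Type) (_ : Fintype Q) (_ : Nonempty Q) (ψ : S → Q ≃ Q),
      (∀ a ∈ W, ∀ b ∈ W, ψ a = ψ b → a = b) ∧
      (∀ u ∈ W, ∀ v ∈ W, u * v ∈ W → ψ (u * v) = (ψ u).trans (ψ v)) := by
  classical
  set K : Finset S := (W ∪ W.image (·⁻¹)) ∪ {e} with hKdef
  have hWK : ∀ w ∈ W, w ∈ K := by
    intro w hw
    simp only [hKdef, Finset.mem_union, Finset.mem_image, Finset.mem_singleton]
    exact Or.inl (Or.inl hw)
  have heK : e ∈ K := by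
    simp [hKdef]
  have hKmem : ∀ c ∈ K, c⁻¹ * c = e ∧ c * c⁻¹ = e := by
    intro c hc
    simp only [hKdef, Finset.mem_union, Finset.mem_image, Finset.mem_singleton] at hc
    rcases hc with (hc | ⟨w, hw, rfl⟩) | rfl
    · exact hWe c hc
    · constructor
      · rw [inv_inv]; exact (hWe w hw).2
      · rw [inv_inv]; exact (hWe w hw).1
    · rw [idem_inv he]; exact ⟨he, he⟩
  have hKinv : ∀ c ∈ K, c⁻¹ ∈ K := by
    intro c hc
    simp only [hKdef, Finset.mem_union, Finset.mem_image, Finset.mem_singleton] at hc ⊢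
    rcases hc with (hc | ⟨w, hw, rfl⟩) | rfl
    · exact Or.inl (Or.inr ⟨c, hc, rfl⟩)
    · rw [inv_inv]; exact Or.inl (Or.inl hw)
    · rw [idem_inv he]; exact Or.inr rfl
  have hKe : ∀ c ∈ K, e * c = c ∧ c * e = c := by
    intro c hc
    obtain ⟨h1, h2⟩ := hKmem c hc
    constructor
    · conv_lhs => rw [← h2]
      exact mim c
    · conv_lhs => rw [← h1, ← mul_assoc]
      rw [mim]
  obtain ⟨D, iD, fD, d, hrange, dm⟩ := hS K
  letI := iD
  letI := fD
  have hne : Nonempty D := ⟨(hrange (Finset.mem_coe.mpr heK)).choose⟩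
  let t : S → D := fun c => if h : ∃ u, d u = c then h.choose else Classical.arbitrary D
  have ht : ∀ c ∈ K, d (t c) = c := by
    intro c hc
    have hex : ∃ u, d u = c := hrange (Finset.mem_coe.mpr hc)
    show d (if h : ∃ u, d u = c then h.choose else Classical.arbitrary D) = c
    rw [dif_pos hex]
    exact hex.choose_spec
  -- powers over the idempotent fiber stay in the fiber
  have dpow : ∀ (u : D), d u = e → ∀ n, d (spow u n) = e := by
    intro u hu n
    induction n with
    | zero => exact hu
    | succ k ih =>
      show d (spow u k * u) = e
      rw [dm _ _ (by rw [ih]; exact heK) (by rw [hu]; exact heK), ih, hu, he]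
  -- minimum idempotent of the fiber over e
  have hmingen : ∀ (P : Finset D), (∀ μ ∈ P, d μ = e ∧ μ * μ = μ) → P.Nonempty →
      ∃ κ, (d κ = e ∧ κ * κ = κ) ∧ ∀ μ ∈ P, κ * μ = κ := by
    intro P
    induction P using Finset.induction_on with
    | empty => intro _ h; exact absurd h (by simp)
    | @insert a s ha ih =>
      intro hall _
      have haP := hall a (Finset.mem_insert_self a s)
      by_cases hs : s.Nonempty
      · obtain ⟨κ₀, ⟨hκd, hκi⟩, hκmin⟩ := ih (fun μ hμ => hall μ (Finset.mem_insert_of_mem hμ)) hs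
        refine ⟨κ₀ * a, ⟨?_, idem_mul hκi haP.2⟩, ?_⟩
        · rw [dm _ _ (by rw [hκd]; exact heK) (by rw [haP.1]; exact heK), hκd, haP.1, he]
        · intro μ hμ
          rcases Finset.mem_insert.mp hμ with rfl | hμs
          · rw [mul_assoc, haP.2]
          · have hμP := hall μ (Finset.mem_insert_of_mem hμs)
            rw [mul_assoc, idem_comm haP.2 hμP.2, ← mul_assoc, hκmin μ hμs]
      · refine ⟨a, ⟨haP.1, haP.2⟩, ?_⟩
        intro μ hμ
        rcases Finset.mem_insert.mp hμ with rfl | hμs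
        · exact haP.2
        · exact absurd ⟨μ, hμs⟩ hs
  have hminex : ∃ κ : D, (d κ = e ∧ κ * κ = κ) ∧ ∀ μ : D, d μ = e → μ * μ = μ → κ * μ = κ := by
    obtain ⟨n, hn⟩ := exists_idem_spow (t e)
    have hP : (Finset.univ.filter (fun μ : D => d μ = e ∧ μ * μ = μ)).Nonempty :=
      ⟨spow (t e) n, by
        simp only [Finset.mem_filter, Finset.mem_univ, true_and]
        exact ⟨dpow (t e) (ht e heK) n, hn⟩⟩
    obtain ⟨κ, hκ, hκmin⟩ := hmingen _ (fun μ hμ => (Finset.mem_filter.mp hμ).2) hP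
    refine ⟨κ, hκ, ?_⟩
    intro μ h1 h2
    apply hκmin
    simp only [Finset.mem_filter, Finset.mem_univ, true_and]
    exact ⟨h1, h2⟩
  obtain ⟨κ, ⟨hκd, hκi⟩, hκmin⟩ := hminex
  -- corner monoid and its units
  let cf : D → Prop := fun u => κ * u = u ∧ u * κ = u
  let U : D → Prop := fun u => cf u ∧ ∃ v, cf v ∧ u * v = κ ∧ v * u = κ
  have cfκ : cf κ := ⟨hκi, hκi⟩
  have cf_mul : ∀ {u v}, cf u → cf v → cf (u * v) := by
    intro u v hu hv
    exact ⟨by rw [← mul_assoc, hu.1], by rw [mul_assoc, hv.2]⟩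
  have Uκ : U κ := ⟨cfκ, κ, cfκ, hκi, hκi⟩
  have U_mul : ∀ {u v}, U u → U v → U (u * v) := by
    intro u v hu hv
    obtain ⟨u', hu', huu', hu'u⟩ := hu.2
    obtain ⟨v', hv', hvv', hv'v⟩ := hv.2
    refine ⟨cf_mul hu.1 hv.1, v' * u', cf_mul hv' hu', ?_, ?_⟩
    · have h1 : u * v * (v' * u') = u * (v * v') * u' := by simp only [mul_assoc]
      rw [h1, hvv', hu.1.2, huu']
    · have h1 : v' * u' * (u * v) = v' * (u' * u) * v := by simp only [mul_assoc]
      rw [h1, hu'u, hv'.2, hv'v]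
  let uinv : D → D := fun u => if h : ∃ v, cf v ∧ u * v = κ ∧ v * u = κ then h.choose else κ
  have huinv : ∀ {u}, U u → cf (uinv u) ∧ u * uinv u = κ ∧ uinv u * u = κ := by
    intro u hu
    have h := hu.2
    have heq : uinv u = h.choose := by
      show (if h' : ∃ v, cf v ∧ u * v = κ ∧ v * u = κ then h'.choose else κ) = h.choose
      rw [dif_pos h]
    rw [heq]
    exact h.choose_spec
  have uinv_left : ∀ {u w}, U u → cf w → w * u = κ → w = uinv u := by
    intro u w hu hw hwu
    obtain ⟨hv, huv, _⟩ := huinv hu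
    calc w = w * κ := (hw.2).symm
    _ = w * (u * uinv u) := by rw [huv]
    _ = (w * u) * uinv u := by rw [mul_assoc]
    _ = κ * uinv u := by rw [hwu]
    _ = uinv u := hv.1
  have U_uinv : ∀ {u}, U u → U (uinv u) := by
    intro u hu
    obtain ⟨h1, h2, h3⟩ := huinv hu
    exact ⟨h1, u, hu.1, h3, h2⟩
  -- elements of the fiber over e in the corner are units with inverse in the fiber
  have Pelt : ∀ u : D, d u = e → cf u → U u ∧ d (uinv u) = e := by
    intro u hu hcf
    have hcfpow : ∀ n, cf (spow u n) := by
      intro n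
      induction n with
      | zero => exact hcf
      | succ k ih => exact cf_mul ih hcf
    obtain ⟨n, hn⟩ := exists_idem_spow u
    have hdn : d (spow u n) = e := dpow u hu n
    have hκn : spow u n = κ := by
      have h1 : κ * spow u n = κ := hκmin _ hdn hn
      have h2 : κ * spow u n = spow u n := (hcfpow n).1
      rw [h1] at h2
      exact h2.symm
    cases n with
    | zero =>
      have hu' : u = κ := hκn
      have hUu : U u := ⟨hcf, κ, cfκ, by rw [hu', hκi], by rw [hu', hκi]⟩
      have : κ = uinv u := uinv_left hUu cfκ (by rw [hu', hκi])
      exact ⟨hUu, by rw [← this]; exact hκd⟩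
    | succ m =>
      have hmu : spow u m * u = κ := hκn
      have hum : u * spow u m = κ := by rw [← spow_comm]; exact hmu
      have hUu : U u := ⟨hcf, spow u m, hcfpow m, hum, hmu⟩
      have heq : spow u m = uinv u := uinv_left hUu (hcfpow m) hmu
      exact ⟨hUu, by rw [← heq]; exact dpow u hu m⟩
  -- the canonical fiber representatives
  let τ : S → D := fun c => κ * t c * κ
  have hτd : ∀ c ∈ K, d (τ c) = c := by
    intro c hc
    have h1 : d (κ * t c) = c := by
      rw [dm _ _ (by rw [hκd]; exact heK) (by rw [ht c hc]; exact hc), hκd, ht c hc,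
        (hKe c hc).1]
    show d ((κ * t c) * κ) = c
    rw [dm _ _ (by rw [h1]; exact hc) (by rw [hκd]; exact heK), h1, hκd, (hKe c hc).2]
  have hτcf : ∀ c, cf (τ c) := by
    intro c
    constructor
    · show κ * (κ * t c * κ) = κ * t c * κ
      simp only [mul_assoc]
      rw [crw hκi]
    · show (κ * t c * κ) * κ = κ * t c * κ
      rw [mul_assoc (κ * t c) κ κ, hκi]
  have hθd : ∀ c ∈ K, d (τ c * τ c⁻¹) = e := by
    intro c hc
    have hc' := hKinv c hc
    rw [dm _ _ (by rw [hτd c hc]; exact hc) (by rw [hτd _ hc']; exact hc'),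
      hτd c hc, hτd _ hc', (hKmem c hc).2]
  have hθ'd : ∀ c ∈ K, d (τ c⁻¹ * τ c) = e := by
    intro c hc
    have hc' := hKinv c hc
    rw [dm _ _ (by rw [hτd _ hc']; exact hc') (by rw [hτd c hc]; exact hc),
      hτd _ hc', hτd c hc, (hKmem c hc).1]
  have hθU : ∀ c ∈ K, U (τ c * τ c⁻¹) := fun c hc =>
    (Pelt _ (hθd c hc) (cf_mul (hτcf c) (hτcf c⁻¹))).1
  have hθ'U : ∀ c ∈ K, U (τ c⁻¹ * τ c) := fun c hc =>
    (Pelt _ (hθ'd c hc) (cf_mul (hτcf c⁻¹) (hτcf c))).1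
  have hτU : ∀ c ∈ K, U (τ c) := by
    intro c hc
    have hθ := hθU c hc
    have hθ' := hθ'U c hc
    have hrt : τ c * (τ c⁻¹ * uinv (τ c * τ c⁻¹)) = κ := by
      rw [← mul_assoc]
      exact (huinv hθ).2.1
    have hl : (uinv (τ c⁻¹ * τ c) * τ c⁻¹) * τ c = κ := by
      rw [mul_assoc]
      exact (huinv hθ').2.2
    have hcfl : cf (uinv (τ c⁻¹ * τ c) * τ c⁻¹) := cf_mul (huinv hθ').1 (hτcf _)
    have hcfr : cf (τ c⁻¹ * uinv (τ c * τ c⁻¹)) := cf_mul (hτcf _) (huinv hθ).1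
    have hlr : uinv (τ c⁻¹ * τ c) * τ c⁻¹ = τ c⁻¹ * uinv (τ c * τ c⁻¹) := by
      calc uinv (τ c⁻¹ * τ c) * τ c⁻¹
          = (uinv (τ c⁻¹ * τ c) * τ c⁻¹) * κ := (hcfl.2).symm
      _ = (uinv (τ c⁻¹ * τ c) * τ c⁻¹) * (τ c * (τ c⁻¹ * uinv (τ c * τ c⁻¹))) := by rw [hrt]
      _ = ((uinv (τ c⁻¹ * τ c) * τ c⁻¹) * τ c) * (τ c⁻¹ * uinv (τ c * τ c⁻¹)) := by
          rw [← mul_assoc]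
      _ = κ * (τ c⁻¹ * uinv (τ c * τ c⁻¹)) := by rw [hl]
      _ = τ c⁻¹ * uinv (τ c * τ c⁻¹) := hcfr.1
    refine ⟨hτcf c, τ c⁻¹ * uinv (τ c * τ c⁻¹), hcfr, hrt, ?_⟩
    rw [← hlr]
    exact hl
  have huinvτ : ∀ c ∈ K, uinv (τ c) = uinv (τ c⁻¹ * τ c) * τ c⁻¹ ∧ d (uinv (τ c)) = c⁻¹ := by
    intro c hc
    have hc' := hKinv c hc
    have hθ' := hθ'U c hc
    have hw : cf (uinv (τ c⁻¹ * τ c) * τ c⁻¹) := cf_mul (huinv hθ').1 (hτcf _)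
    have hwl : (uinv (τ c⁻¹ * τ c) * τ c⁻¹) * τ c = κ := by
      rw [mul_assoc]; exact (huinv hθ').2.2
    have heq : uinv (τ c⁻¹ * τ c) * τ c⁻¹ = uinv (τ c) := uinv_left (hτU c hc) hw hwl
    refine ⟨heq.symm, ?_⟩
    rw [← heq]
    rw [dm _ _ (by rw [(Pelt _ (hθ'd c hc) (cf_mul (hτcf c⁻¹) (hτcf c))).2]; exact heK)
      (by rw [hτd _ hc']; exact hc'),
      (Pelt _ (hθ'd c hc) (cf_mul (hτcf c⁻¹) (hτcf c))).2, hτd _ hc', (hKe _ hc').1]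
  have huinvτ' : ∀ c ∈ K, uinv (τ c⁻¹) = uinv (τ c * τ c⁻¹) * τ c := by
    intro c hc
    have h := (huinvτ c⁻¹ (hKinv c hc)).1
    rwa [inv_inv] at h
  -- the normal subgroup candidate
  let Nh : D → Prop := fun ν => d ν = e ∧ U ν
  have Nh_mul : ∀ {ν ν'}, Nh ν → Nh ν' → Nh (ν * ν') := by
    intro ν ν' h h'
    exact ⟨by rw [dm _ _ (by rw [h.1]; exact heK) (by rw [h'.1]; exact heK), h.1, h'.1, he],
      U_mul h.2 h'.2⟩
  have Nh_uinv : ∀ {ν}, Nh ν → Nh (uinv ν) := by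
    intro ν h
    exact ⟨(Pelt ν h.1 h.2.1).2, U_uinv h.2⟩
  have Nhκ : Nh κ := ⟨hκd, Uκ⟩
  -- fibers over K consist of single cosets
  have coset_r : ∀ c ∈ K, ∀ u, d u = c → U u → ∃ ν, Nh ν ∧ u = ν * τ c := by
    intro c hc u hud hU
    have hc' := hKinv c hc
    have hν0 : Nh (u * τ c⁻¹) := by
      refine ⟨?_, U_mul hU (hτU _ hc')⟩
      rw [dm _ _ (by rw [hud]; exact hc) (by rw [hτd _ hc']; exact hc'), hud, hτd _ hc',
        (hKmem c hc).2]
    have hθ : Nh (τ c * τ c⁻¹) := ⟨hθd c hc, hθU c hc⟩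
    have h1 : u = (u * τ c⁻¹) * uinv (τ c⁻¹) := by
      rw [mul_assoc, (huinv (hτU _ hc')).2.1, hU.1.2]
    refine ⟨(u * τ c⁻¹) * uinv (τ c * τ c⁻¹), Nh_mul hν0 (Nh_uinv hθ), ?_⟩
    rw [mul_assoc, ← huinvτ' c hc, ← h1]
  have coset_l : ∀ c ∈ K, ∀ u, d u = c → U u → ∃ ν, Nh ν ∧ u = τ c * ν := by
    intro c hc u hud hU
    have hν : Nh (uinv (τ c) * u) := by
      refine ⟨?_, U_mul (U_uinv (hτU c hc)) hU⟩
      rw [dm _ _ (by rw [(huinvτ c hc).2]; exact hKinv c hc) (by rw [hud]; exact hc),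
        (huinvτ c hc).2, hud, (hKmem c hc).1]
    refine ⟨uinv (τ c) * u, hν, ?_⟩
    rw [← mul_assoc, (huinv (hτU c hc)).2.1, hU.1.1]
  -- generator-level exchange
  have exch_τ : ∀ c ∈ K, ∀ ν, Nh ν → ∃ ν', Nh ν' ∧ τ c * ν = ν' * τ c := by
    intro c hc ν hν
    have hd : d (τ c * ν) = c := by
      rw [dm _ _ (by rw [hτd c hc]; exact hc) (by rw [hν.1]; exact heK), hτd c hc, hν.1,
        (hKe c hc).2]
    exact coset_r c hc _ hd (U_mul (hτU c hc) hν.2)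
  have exch_uinvτ : ∀ c ∈ K, ∀ ν, Nh ν → ∃ ν', Nh ν' ∧ uinv (τ c) * ν = ν' * uinv (τ c) := by
    intro c hc ν hν
    have hc' := hKinv c hc
    have hd : d (uinv (τ c) * ν) = c⁻¹ := by
      rw [dm _ _ (by rw [(huinvτ c hc).2]; exact hc') (by rw [hν.1]; exact heK),
        (huinvτ c hc).2, hν.1, (hKe _ hc').2]
    obtain ⟨ν1, hν1, h1⟩ := coset_r c⁻¹ hc' _ hd (U_mul (U_uinv (hτU c hc)) hν.2)
    have hθ' : Nh (τ c⁻¹ * τ c) := ⟨hθ'd c hc, hθ'U c hc⟩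
    have hback : (τ c⁻¹ * τ c) * uinv (τ c) = τ c⁻¹ := by
      rw [(huinvτ c hc).1, ← mul_assoc, (huinv (hθ'U c hc)).2.1, (hτcf c⁻¹).1]
    refine ⟨ν1 * (τ c⁻¹ * τ c), Nh_mul hν1 hθ', ?_⟩
    rw [h1, mul_assoc ν1 (τ c⁻¹ * τ c) (uinv (τ c)), hback]
  have exch_N : ∀ a, Nh a → ∀ ν, Nh ν → ∃ ν', Nh ν' ∧ a * ν = ν' * a := by
    intro a ha ν hν
    refine ⟨(a * ν) * uinv a, Nh_mul (Nh_mul ha hν) (Nh_uinv ha), ?_⟩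
    rw [mul_assoc ((a * ν)) (uinv a) a, (huinv ha.2).2.2, (Nh_mul ha hν).2.1.2]
  -- the group generated by the representatives
  let Gen : D → Prop := fun a => (∃ c ∈ K, a = τ c) ∨ (∃ c ∈ K, a = uinv (τ c)) ∨ Nh a
  have Gen_U : ∀ a, Gen a → U a := by
    rintro a (⟨c, hc, rfl⟩ | ⟨c, hc, rfl⟩ | ha)
    · exact hτU c hc
    · exact U_uinv (hτU c hc)
    · exact ha.2
  let lp : List D → D := fun l => l.foldr (· * ·) κ
  have lp_nil : lp [] = κ := rfl
  have lp_cons : ∀ a l, lp (a :: l) = a * lp l := fun a l => rfl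
  have lp_U : ∀ l : List D, (∀ a ∈ l, Gen a) → U (lp l) := by
    intro l hl
    induction l with
    | nil => exact Uκ
    | cons a l ih =>
      rw [lp_cons]
      exact U_mul (Gen_U a (hl a List.mem_cons_self)) (ih fun b hb => hl b (List.mem_cons_of_mem a hb))
  have lp_app : ∀ (l : List D) (x : D), U x → lp (l ++ [x]) = lp l * x := by
    intro l x hx
    induction l with
    | nil =>
      show lp [x] = lp [] * x
      rw [lp_nil, lp_cons, lp_nil, hx.1.2, hx.1.1]
    | cons a l ih =>
      show a * lp (l ++ [x]) = (a * lp l) * x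
      rw [ih, mul_assoc]
  let GH : D → Prop := fun g => ∃ l : List D, (∀ a ∈ l, Gen a) ∧ g = lp l
  have GH_U : ∀ g, GH g → U g := by
    rintro g ⟨l, hl, rfl⟩
    exact lp_U l hl
  have GHκ : GH κ := ⟨[], by simp, rfl⟩
  have GH_mulτ : ∀ g, GH g → ∀ c ∈ K, GH (g * τ c) := by
    rintro g ⟨l, hl, rfl⟩ c hc
    refine ⟨l ++ [τ c], ?_, ?_⟩
    · intro a hal
      rcases List.mem_append.mp hal with h | h
      · exact hl a h
      · rw [List.mem_singleton.mp h]
        exact Or.inl ⟨c, hc, rfl⟩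
    · rw [lp_app l (τ c) (hτU c hc)]
  have GH_mulu : ∀ g, GH g → ∀ c ∈ K, GH (g * uinv (τ c)) := by
    rintro g ⟨l, hl, rfl⟩ c hc
    refine ⟨l ++ [uinv (τ c)], ?_, ?_⟩
    · intro a hal
      rcases List.mem_append.mp hal with h | h
      · exact hl a h
      · rw [List.mem_singleton.mp h]
        exact Or.inr (Or.inl ⟨c, hc, rfl⟩)
    · rw [lp_app l _ (U_uinv (hτU c hc))]
  have exch_G : ∀ g, GH g → ∀ ν, Nh ν → ∃ ν', Nh ν' ∧ g * ν = ν' * g := by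
    have key : ∀ l : List D, (∀ a ∈ l, Gen a) → ∀ ν, Nh ν →
        ∃ ν', Nh ν' ∧ lp l * ν = ν' * lp l := by
      intro l
      induction l with
      | nil =>
        intro _ ν hν
        refine ⟨ν, hν, ?_⟩
        rw [lp_nil, hν.2.1.1, hν.2.1.2]
      | cons a l ih =>
        intro hl ν hν
        obtain ⟨ν1, hν1, h1⟩ := ih (fun b hb => hl b (List.mem_cons_of_mem a hb)) ν hν
        have hgen := hl a List.mem_cons_self
        have hstep : ∃ ν2, Nh ν2 ∧ a * ν1 = ν2 * a := by
          rcases hgen with ⟨c, hc, rfl⟩ | ⟨c, hc, rfl⟩ | ha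
          · exact exch_τ c hc ν1 hν1
          · exact exch_uinvτ c hc ν1 hν1
          · exact exch_N a ha ν1 hν1
        obtain ⟨ν2, hν2, h2⟩ := hstep
        refine ⟨ν2, hν2, ?_⟩
        rw [lp_cons, mul_assoc, h1, ← mul_assoc, h2, mul_assoc]
    rintro g ⟨l, hl, rfl⟩ ν hν
    exact key l hl ν hν
  -- the quotient
  letI sd : Setoid {g : D // GH g} :=
    ⟨fun g h => ∃ ν, Nh ν ∧ g.1 = ν * h.1, by
      constructor
      · intro g
        exact ⟨κ, Nhκ, ((GH_U g.1 g.2).1.1).symm⟩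
      · rintro g h ⟨ν, hν, hgh⟩
        refine ⟨uinv ν, Nh_uinv hν, ?_⟩
        rw [hgh, ← mul_assoc, (huinv hν.2).2.2, (GH_U h.1 h.2).1.1]
      · rintro g h k ⟨ν, hν, hgh⟩ ⟨μ, hμ, hhk⟩
        exact ⟨ν * μ, Nh_mul hν hμ, by rw [hgh, hhk, mul_assoc]⟩⟩
  have hQfin : Fintype (Quotient sd) := by
    have : Finite {g : D // GH g} := Subtype.finite
    have : Finite (Quotient sd) := Quotient.finite sd
    exact Fintype.ofFinite _
  -- the translation equivalences
  have respτ : ∀ (x : S) (hx : x ∈ K), ∀ g h : {g : D // GH g}, sd.r g h →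
      sd.r ⟨g.1 * τ x, GH_mulτ g.1 g.2 x hx⟩ ⟨h.1 * τ x, GH_mulτ h.1 h.2 x hx⟩ := by
    rintro x hx g h ⟨ν, hν, hgh⟩
    exact ⟨ν, hν, by show g.1 * τ x = ν * (h.1 * τ x); rw [hgh, mul_assoc]⟩
  have respu : ∀ (x : S) (hx : x ∈ K), ∀ g h : {g : D // GH g}, sd.r g h →
      sd.r ⟨g.1 * uinv (τ x), GH_mulu g.1 g.2 x hx⟩ ⟨h.1 * uinv (τ x), GH_mulu h.1 h.2 x hx⟩ := by
    rintro x hx g h ⟨ν, hν, hgh⟩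
    exact ⟨ν, hν, by show g.1 * uinv (τ x) = ν * (h.1 * uinv (τ x)); rw [hgh, mul_assoc]⟩
  let mvτ : ∀ (x : S), x ∈ K → Quotient sd → Quotient sd := fun x hx =>
    Quotient.map (fun g => ⟨g.1 * τ x, GH_mulτ g.1 g.2 x hx⟩) (respτ x hx)
  let mvu : ∀ (x : S), x ∈ K → Quotient sd → Quotient sd := fun x hx =>
    Quotient.map (fun g => ⟨g.1 * uinv (τ x), GH_mulu g.1 g.2 x hx⟩) (respu x hx)
  have mvτ_mk : ∀ (x : S) (hx : x ∈ K) (g : {g : D // GH g}),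
      mvτ x hx ⟦g⟧ = ⟦(⟨g.1 * τ x, GH_mulτ g.1 g.2 x hx⟩ : {g : D // GH g})⟧ := by
    intro x hx g
    show Quotient.map _ _ ⟦g⟧ = _
    rw [Quotient.map_mk]
  have mvu_mk : ∀ (x : S) (hx : x ∈ K) (g : {g : D // GH g}),
      mvu x hx ⟦g⟧ = ⟦(⟨g.1 * uinv (τ x), GH_mulu g.1 g.2 x hx⟩ : {g : D // GH g})⟧ := by
    intro x hx g
    show Quotient.map _ _ ⟦g⟧ = _
    rw [Quotient.map_mk]
  let EQ : ∀ (x : S), x ∈ K → (Quotient sd ≃ Quotient sd) := fun x hx =>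
    { toFun := mvτ x hx
      invFun := mvu x hx
      left_inv := by
        intro q
        induction q using Quotient.inductionOn with
        | h g =>
          rw [mvτ_mk x hx g, mvu_mk x hx ⟨g.1 * τ x, GH_mulτ g.1 g.2 x hx⟩]
          apply congrArg
          apply Subtype.ext
          show (g.1 * τ x) * uinv (τ x) = g.1
          rw [mul_assoc, (huinv (hτU x hx)).2.1, (GH_U g.1 g.2).1.2]
      right_inv := by
        intro q
        induction q using Quotient.inductionOn with
        | h g =>
          rw [mvu_mk x hx g, mvτ_mk x hx ⟨g.1 * uinv (τ x), GH_mulu g.1 g.2 x hx⟩]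
          apply congrArg
          apply Subtype.ext
          show (g.1 * uinv (τ x)) * τ x = g.1
          rw [mul_assoc, (huinv (hτU x hx)).2.2, (GH_U g.1 g.2).1.2] }
  let ψ : S → Quotient sd ≃ Quotient sd := fun x =>
    if hx : x ∈ K then EQ x hx else Equiv.refl _
  have hψdef : ∀ (x : S) (hx : x ∈ K), ψ x = EQ x hx := by
    intro x hx
    show (if hx : x ∈ K then EQ x hx else Equiv.refl _) = EQ x hx
    rw [dif_pos hx]
  have hψapp : ∀ (x : S) (hx : x ∈ K) (g : {g : D // GH g}),
      (ψ x) ⟦g⟧ = ⟦(⟨g.1 * τ x, GH_mulτ g.1 g.2 x hx⟩ : {g : D // GH g})⟧ := by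
    intro x hx g
    rw [hψdef x hx]
    show mvτ x hx ⟦g⟧ = _
    exact mvτ_mk x hx g
  -- multiplicativity
  have hψmul : ∀ u ∈ K, ∀ v ∈ K, u * v ∈ K → ψ (u * v) = (ψ u).trans (ψ v) := by
    intro u hu v hv huv
    apply Equiv.ext
    intro q
    induction q using Quotient.inductionOn with
    | h g =>
      rw [Equiv.trans_apply, hψapp u hu g, hψapp v hv _, hψapp (u * v) huv g]
      have hd : d (τ u * τ v) = u * v := by
        rw [dm _ _ (by rw [hτd u hu]; exact hu) (by rw [hτd v hv]; exact hv), hτd u hu,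
          hτd v hv]
      obtain ⟨ν2, hν2, h2⟩ := coset_r (u * v) huv _ hd (U_mul (hτU u hu) (hτU v hv))
      obtain ⟨ν', hν', h'⟩ := exch_G g.1 g.2 ν2 hν2
      refine (Quotient.sound ?_).symm
      refine ⟨ν', hν', ?_⟩
      show (g.1 * τ u) * τ v = ν' * (g.1 * τ (u * v))
      rw [mul_assoc, h2, ← mul_assoc, h', mul_assoc]
  -- injectivity
  have hψinj : ∀ a ∈ W, ∀ b ∈ W, ψ a = ψ b → a = b := by
    intro a ha b hb h
    have haK := hWK a ha
    have hbK := hWK b hb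
    have happ := congrFun (congrArg (fun E => (E : Quotient sd ≃ Quotient sd).toFun) h)
      ⟦(⟨κ, GHκ⟩ : {g : D // GH g})⟧
    simp only [Equiv.toFun_as_coe] at happ
    rw [hψapp a haK _, hψapp b hbK _] at happ
    have hrel := Quotient.exact happ
    obtain ⟨ν, hν, heq⟩ := hrel
    have heq' : τ a = ν * τ b := by
      have heq0 : κ * τ a = ν * (κ * τ b) := heq
      rw [(hτcf a).1, (hτcf b).1] at heq0
      exact heq0
    have : d (τ a) = d (ν * τ b) := by rw [heq']
    rw [hτd a haK,
      dm _ _ (by rw [hν.1]; exact heK) (by rw [hτd b hbK]; exact hbK), hν.1, hτd b hbK,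
      (hKe b hbK).1] at this
    exact this
  exact ⟨Quotient sd, hQfin, ⟨⟦⟨κ, GHκ⟩⟧⟩, ψ, hψinj, fun u hu v hv huv =>
    hψmul u (hWK u hu) v (hWK v hv) (hWK _ huv)⟩

end ISG

open ISG

/-- A countable iLWF inverse semigroup with finitely many idempotents is iLEF. -/
theorem isiLEF_of_isiLWF_of_finite_idempotents (S : Type*) [InverseSemigroup S]
    [Countable S] (hidem : {e : S | e * e = e}.Finite) (hS : IsiLWF S) : IsiLEF S := by
  classical
  intro H
  set E : Finset S := hidem.toFinset with hEdef
  have hEmem : ∀ {x : S}, x ∈ E ↔ x * x = x := fun {x} => Set.Finite.mem_toFinset hidem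
  -- representatives of H-classes
  let r : S → S → S := fun e f =>
    if h : ∃ s : S, s * s⁻¹ = e ∧ s⁻¹ * s = f then h.choose else e
  have hr : ∀ e f : S, (∃ s : S, s * s⁻¹ = e ∧ s⁻¹ * s = f) →
      (r e f) * (r e f)⁻¹ = e ∧ (r e f)⁻¹ * (r e f) = f := by
    intro e f h
    have heq : r e f = h.choose := by
      show (if h' : ∃ s : S, s * s⁻¹ = e ∧ s⁻¹ * s = f then h'.choose else e) = h.choose
      rw [dif_pos h]
    rw [heq]
    exact h.choose_spec
  -- columns
  let Ee : S → Finset S := fun e => E.filter (fun f => ∃ s : S, s * s⁻¹ = e ∧ s⁻¹ * s = f)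
  have hEe : ∀ e f : S, f ∈ Ee e ↔ (f * f = f ∧ ∃ s : S, s * s⁻¹ = e ∧ s⁻¹ * s = f) := by
    intro e f
    show f ∈ E.filter _ ↔ _
    rw [Finset.mem_filter, hEmem]
  let col : S → S → S := fun f z => z⁻¹ * f * z
  let coc : S → S → S → S := fun e f z => (r e f * z) * (r e (col f z))⁻¹
  -- column stability
  have hcolEe : ∀ (e f s : S), f ∈ Ee e → f * (s * s⁻¹) = f → col f s ∈ Ee e := by
    intro e f s hf hdom
    obtain ⟨hfid, hw⟩ := (hEe e f).mp hf
    have hrf := hr e f hw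
    have hx := rep_mul hrf.1 hrf.2 hdom
    exact (hEe e _).mpr ⟨conj_idem hfid s, ⟨r e f * s, hx.1, hx.2⟩⟩
  -- cocycle data
  have hcocGe : ∀ (e f z : S), f ∈ Ee e → f * (z * z⁻¹) = f →
      Ge e (coc e f z) ∧ coc e f z * r e (col f z) = r e f * z := by
    intro e f z hf hdom
    obtain ⟨hfid, hw⟩ := (hEe e f).mp hf
    have hrf := hr e f hw
    have hx := rep_mul hrf.1 hrf.2 hdom
    have hrc := hr e (col f z) ⟨r e f * z, hx.1, hx.2⟩
    exact Hclass_part hx.1 hx.2 hrc.1 hrc.2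
  -- column injectivity
  have col_inj : ∀ (f f' s : S), f * f = f → f' * f' = f' → f * (s * s⁻¹) = f →
      f' * (s * s⁻¹) = f' → col f s = col f' s → f = f' := by
    intro f f' s hf hf' hd hd' hcol
    have h1 := conj_back hf hd
    have h2 := conj_back hf' hd'
    have : s * (col f s) * s⁻¹ = s * (col f' s) * s⁻¹ := by rw [hcol]
    rw [show s * (col f s) * s⁻¹ = s * (s⁻¹ * f * s) * s⁻¹ from rfl] at this
    rw [show s * (col f' s) * s⁻¹ = s * (s⁻¹ * f' * s) * s⁻¹ from rfl] at this
    rw [h1, h2] at this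
    exact this
  -- windows for the group parts
  let Wg : S → Finset S := fun e =>
    ((Ee e ×ˢ H).image
      (fun p => if p.1 * (p.2 * p.2⁻¹) = p.1 then coc e p.1 p.2 else e)) ∪ {e}
  have hWmem : ∀ (e : S), ∀ f ∈ Ee e, ∀ z ∈ H, f * (z * z⁻¹) = f → coc e f z ∈ Wg e := by
    intro e f hf z hz hdom
    apply Finset.mem_union_left
    apply Finset.mem_image.mpr
    refine ⟨(f, z), Finset.mem_product.mpr ⟨hf, hz⟩, ?_⟩
    rw [if_pos hdom]
  have hWGe : ∀ (e : S), e ∈ E → ∀ w ∈ Wg e, w⁻¹ * w = e ∧ w * w⁻¹ = e := by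
    intro e he w hw
    have heid : e * e = e := hEmem.mp he
    rcases Finset.mem_union.mp hw with hw | hw
    · obtain ⟨p, hp, hpe⟩ := Finset.mem_image.mp hw
      obtain ⟨hp1, hp2⟩ := Finset.mem_product.mp hp
      by_cases hdom : p.1 * (p.2 * p.2⁻¹) = p.1
      · rw [if_pos hdom] at hpe
        rw [← hpe]
        exact (hcocGe e p.1 p.2 hp1 hdom).1
      · rw [if_neg hdom] at hpe
        rw [← hpe, idem_inv heid]
        exact ⟨heid, heid⟩
    · rw [Finset.mem_singleton.mp hw, idem_inv heid]
      exact ⟨heid, heid⟩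
  -- group data for each idempotent
  have gp : ∀ i : {e : S // e ∈ E}, ∃ (Q : Type) (_ : Fintype Q) (_ : Nonempty Q)
      (ψ : S → Q ≃ Q),
      (∀ a ∈ Wg i.1, ∀ b ∈ Wg i.1, ψ a = ψ b → a = b) ∧
      (∀ u ∈ Wg i.1, ∀ v ∈ Wg i.1, u * v ∈ Wg i.1 → ψ (u * v) = (ψ u).trans (ψ v)) :=
    fun i => group_part hS i.1 (hEmem.mp i.2) (Wg i.1) (hWGe i.1 i.2)
  choose Q fQ nQ ψ hψinj hψmul using gp
  haveI : ∀ i, Fintype (Q i) := fQ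
  -- the component partial bijections
  let Xi : {e : S // e ∈ E} → Type _ := fun i => Q i × {f : S // f ∈ Ee i.1}
  let gfun : ∀ i : {e : S // e ∈ E}, S → Xi i → Option (Xi i) := fun i s p =>
    if h : p.2.1 * (s * s⁻¹) = p.2.1 then
      some (ψ i (coc i.1 p.2.1 s) p.1, ⟨col p.2.1 s, hcolEe i.1 p.2.1 s p.2.2 h⟩)
    else none
  have gfun_pos : ∀ (i : {e : S // e ∈ E}) (s : S) (p : Xi i)
      (h : p.2.1 * (s * s⁻¹) = p.2.1),
      gfun i s p = some (ψ i (coc i.1 p.2.1 s) p.1,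
        ⟨col p.2.1 s, hcolEe i.1 p.2.1 s p.2.2 h⟩) := by
    intro i s p h
    show (if h : p.2.1 * (s * s⁻¹) = p.2.1 then _ else none) = _
    rw [dif_pos h]
  have gfun_neg : ∀ (i : {e : S // e ∈ E}) (s : S) (p : Xi i)
      (h : ¬ (p.2.1 * (s * s⁻¹) = p.2.1)), gfun i s p = none := by
    intro i s p h
    show (if h : p.2.1 * (s * s⁻¹) = p.2.1 then _ else none) = none
    rw [dif_neg h]
  have gfun_inj : ∀ (i : {e : S // e ∈ E}) (s : S) (p p' : Xi i) (c : Xi i),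
      gfun i s p = some c → gfun i s p' = some c → p = p' := by
    intro i s p p' c hp hp'
    by_cases h : p.2.1 * (s * s⁻¹) = p.2.1
    · by_cases h' : p'.2.1 * (s * s⁻¹) = p'.2.1
      · rw [gfun_pos i s p h] at hp
        rw [gfun_pos i s p' h'] at hp'
        rw [← hp'] at hp
        rw [Option.some_inj, Prod.ext_iff] at hp
        obtain ⟨hq, hcol⟩ := hp
        have hcol' : col p.2.1 s = col p'.2.1 s := congrArg Subtype.val hcol
        have hfid : p.2.1 * p.2.1 = p.2.1 := ((hEe i.1 p.2.1).mp p.2.2).1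
        have hfid' : p'.2.1 * p'.2.1 = p'.2.1 := ((hEe i.1 p'.2.1).mp p'.2.2).1
        have hfeq : p.2.1 = p'.2.1 := col_inj _ _ s hfid hfid' h h' hcol'
        have h2 : p.2 = p'.2 := Subtype.ext hfeq
        have hceq : coc i.1 p.2.1 s = coc i.1 p'.2.1 s := by rw [hfeq]
        rw [hceq] at hq
        have hqeq : p.1 = p'.1 := (ψ i (coc i.1 p'.2.1 s)).injective hq
        exact Prod.ext hqeq h2
      · rw [gfun_neg i s p' h'] at hp'
        exact absurd hp' (by simp)
    · rw [gfun_neg i s p h] at hp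
      exact absurd hp (by simp)
  let g : ∀ i : {e : S // e ∈ E}, S → PB (Xi i) := fun i s =>
    ⟨gfun i s, fun p p' c => gfun_inj i s p p' c⟩
  let f' : S → ∀ i, PB (Xi i) := fun s i => g i s
  -- homomorphism property
  have hom : ∀ x ∈ H, ∀ y ∈ H, x * y ∈ H → f' (x * y) = f' x * f' y := by
    intro x hx y hy hxy
    funext i
    apply Subtype.ext
    funext p
    show gfun i (x * y) p = (gfun i x p).bind (g i y).1
    have hfid : p.2.1 * p.2.1 = p.2.1 := ((hEe i.1 p.2.1).mp p.2.2).1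
    by_cases h1 : p.2.1 * (x * x⁻¹) = p.2.1
    · by_cases h2 : (col p.2.1 x) * (y * y⁻¹) = col p.2.1 x
      · have hdomxy : p.2.1 * ((x * y) * (x * y)⁻¹) = p.2.1 := L1a hfid h1 h2
        rw [gfun_pos i (x * y) p hdomxy, gfun_pos i x p h1, Option.bind_some]
        have h2' : (⟨col p.2.1 x, hcolEe i.1 p.2.1 x p.2.2 h1⟩ :
            {f : S // f ∈ Ee i.1}).1 * (y * y⁻¹) =
            (⟨col p.2.1 x, hcolEe i.1 p.2.1 x p.2.2 h1⟩ : {f : S // f ∈ Ee i.1}).1 := h2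
        show _ = gfun i y _
        rw [gfun_pos i y _ h2']
        -- now equate the two `some` values
        have hcoc : coc i.1 p.2.1 x * coc i.1 (col p.2.1 x) y = coc i.1 p.2.1 (x * y) := by
          obtain ⟨_, hw⟩ := (hEe i.1 p.2.1).mp p.2.2
          have hrf := hr i.1 p.2.1 hw
          have hxx := rep_mul hrf.1 hrf.2 h1
          have hrcx := hr i.1 (col p.2.1 x) ⟨r i.1 p.2.1 * x, hxx.1, hxx.2⟩
          have hHx := Hclass_part hxx.1 hxx.2 hrcx.1 hrcx.2
          have hcolxEe := hcolEe i.1 p.2.1 x p.2.2 h1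
          have hyy := rep_mul hrcx.1 hrcx.2 h2
          have hrcy := hr i.1 (col (col p.2.1 x) y) ⟨r i.1 (col p.2.1 x) * y, hyy.1, hyy.2⟩
          have hHy := Hclass_part hyy.1 hyy.2 hrcy.1 hrcy.2
          have hxyx := rep_mul hrf.1 hrf.2 hdomxy
          have hcolcomp : col p.2.1 (x * y) = col (col p.2.1 x) y := col_comp p.2.1 x y
          have hrcxy := hr i.1 (col p.2.1 (x * y)) ⟨r i.1 p.2.1 * (x * y), hxyx.1, hxyx.2⟩
          have hHxy := Hclass_part hxyx.1 hxyx.2 hrcxy.1 hrcxy.2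
          have hHx1 : Ge i.1 (coc i.1 p.2.1 x) := hHx.1
          have hHy1 : Ge i.1 (coc i.1 (col p.2.1 x) y) := hHy.1
          have hHxy1 : Ge i.1 (coc i.1 p.2.1 (x * y)) := hHxy.1
          have hHx2 : coc i.1 p.2.1 x * r i.1 (col p.2.1 x) = r i.1 p.2.1 * x := hHx.2
          have hHy2 : coc i.1 (col p.2.1 x) y * r i.1 (col (col p.2.1 x) y) =
            r i.1 (col p.2.1 x) * y := hHy.2
          have hHxy2 : coc i.1 p.2.1 (x * y) * r i.1 (col p.2.1 (x * y)) =
            r i.1 p.2.1 * (x * y) := hHxy.2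
          apply Ge_cancel_r (Ge_mul hHx1 hHy1) hHxy1 hrcxy.1
          calc (coc i.1 p.2.1 x * coc i.1 (col p.2.1 x) y) * r i.1 (col p.2.1 (x * y))
              = coc i.1 p.2.1 x * (coc i.1 (col p.2.1 x) y * r i.1 (col (col p.2.1 x) y)) := by
                rw [hcolcomp, mul_assoc]
          _ = coc i.1 p.2.1 x * (r i.1 (col p.2.1 x) * y) := by rw [hHy2]
          _ = (coc i.1 p.2.1 x * r i.1 (col p.2.1 x)) * y := by rw [← mul_assoc]
          _ = (r i.1 p.2.1 * x) * y := by rw [hHx2]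
          _ = r i.1 p.2.1 * (x * y) := by rw [mul_assoc]
          _ = coc i.1 p.2.1 (x * y) * r i.1 (col p.2.1 (x * y)) := hHxy2.symm
        have hmemx : coc i.1 p.2.1 x ∈ Wg i.1 := hWmem i.1 p.2.1 p.2.2 x hx h1
        have hmemy : coc i.1 (col p.2.1 x) y ∈ Wg i.1 :=
          hWmem i.1 (col p.2.1 x) (hcolEe i.1 p.2.1 x p.2.2 h1) y hy h2
        have hmemxy : coc i.1 p.2.1 x * coc i.1 (col p.2.1 x) y ∈ Wg i.1 := by
          rw [hcoc]
          exact hWmem i.1 p.2.1 p.2.2 (x * y) hxy hdomxy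
        have hψm := hψmul i _ hmemx _ hmemy hmemxy
        rw [hcoc] at hψm
        apply congrArg some
        apply Prod.ext
        · show ψ i (coc i.1 p.2.1 (x * y)) p.1 = ψ i (coc i.1 (col p.2.1 x) y)
            (ψ i (coc i.1 p.2.1 x) p.1)
          rw [hψm]
          rfl
        · apply Subtype.ext
          show col p.2.1 (x * y) = col (col p.2.1 x) y
          exact col_comp p.2.1 x y
      · have hnd : ¬ (p.2.1 * ((x * y) * (x * y)⁻¹) = p.2.1) := by
          intro hcon
          exact h2 (L1c hfid hcon)
        rw [gfun_neg i (x * y) p hnd, gfun_pos i x p h1, Option.bind_some]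
        show none = gfun i y _
        rw [gfun_neg i y _ h2]
    · have hnd : ¬ (p.2.1 * ((x * y) * (x * y)⁻¹) = p.2.1) := by
        intro hcon
        exact h1 (L1b hfid hcon)
      rw [gfun_neg i (x * y) p hnd, gfun_neg i x p h1]
      rfl
  -- injectivity on H
  have hinj : Set.InjOn f' ↑H := by
    intro x hxH y hyH hfeq
    by_contra hxy
    have hxH' : x ∈ H := hxH
    have hyH' : y ∈ H := hyH
    -- first component : e = x⁻¹x
    have hex : (x⁻¹ * x) * (x⁻¹ * x) = x⁻¹ * x := inv_mul_idem x
    have hiE : x⁻¹ * x ∈ E := hEmem.mpr hex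
    set i : {e : S // e ∈ E} := ⟨x⁻¹ * x, hiE⟩ with hidef
    have hf0id : (x * x⁻¹) * (x * x⁻¹) = x * x⁻¹ := mul_inv_idem x
    have hf0Ee : x * x⁻¹ ∈ Ee i.1 := by
      apply (hEe i.1 (x * x⁻¹)).mpr
      refine ⟨hf0id, x⁻¹, ?_, ?_⟩
      · rw [ISG.inv_inv]
      · rw [ISG.inv_inv]
    have h1x : (x * x⁻¹) * (x * x⁻¹) = x * x⁻¹ := hf0id
    have hcompeq : ∀ p : Xi i, gfun i x p = gfun i y p := by
      intro p
      have := congrFun hfeq i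
      have h2 : (g i x).1 = (g i y).1 := congrArg Subtype.val this
      exact congrFun h2 p
    by_cases hA : (x * x⁻¹) * (y * y⁻¹) = x * x⁻¹
    · -- both defined at (q, x x⁻¹)
      obtain ⟨q0⟩ := nQ i
      have hvx := gfun_pos i x (q0, ⟨x * x⁻¹, hf0Ee⟩) h1x
      have hvy := gfun_pos i y (q0, ⟨x * x⁻¹, hf0Ee⟩) hA
      have hco : gfun i x (q0, ⟨x * x⁻¹, hf0Ee⟩) = gfun i y (q0, ⟨x * x⁻¹, hf0Ee⟩) :=
        hcompeq _
      rw [hvx, hvy, Option.some_inj, Prod.ext_iff] at hco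
      have hcoleq : col (x * x⁻¹) x = col (x * x⁻¹) y := congrArg Subtype.val hco.2
      -- the ψ's agree at every point
      have hψeq : ψ i (coc i.1 (x * x⁻¹) x) = ψ i (coc i.1 (x * x⁻¹) y) := by
        apply Equiv.ext
        intro q
        have hvx' := gfun_pos i x (q, ⟨x * x⁻¹, hf0Ee⟩) h1x
        have hvy' := gfun_pos i y (q, ⟨x * x⁻¹, hf0Ee⟩) hA
        have hco' := hcompeq (q, ⟨x * x⁻¹, hf0Ee⟩)
        rw [hvx', hvy', Option.some_inj, Prod.ext_iff] at hco'
        exact hco'.1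
      have hceq : coc i.1 (x * x⁻¹) x = coc i.1 (x * x⁻¹) y :=
        hψinj i _ (hWmem i.1 _ hf0Ee x hxH' h1x) _ (hWmem i.1 _ hf0Ee y hyH' hA) hψeq
      -- derive r * x = r * y
      have hrfx := hcocGe i.1 (x * x⁻¹) x hf0Ee h1x
      have hrfy := hcocGe i.1 (x * x⁻¹) y hf0Ee hA
      have hrxy : r i.1 (x * x⁻¹) * x = r i.1 (x * x⁻¹) * y := by
        rw [← hrfx.2, ← hrfy.2, hceq, hcoleq]
      -- x = (x x⁻¹) * y
      obtain ⟨_, hw0⟩ := (hEe i.1 (x * x⁻¹)).mp hf0Ee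
      have hrf := hr i.1 (x * x⁻¹) hw0
      have hfxy : (x * x⁻¹) * x = (x * x⁻¹) * y := by
        have := congrArg (fun z => (r i.1 (x * x⁻¹))⁻¹ * z) hrxy
        rw [← mul_assoc, ← mul_assoc, hrf.2] at this
        exact this
      have hx_eq : x = (x * x⁻¹) * y := by
        rw [← hfxy, mim]
      -- second component : e' = y⁻¹ y
      have hey : (y⁻¹ * y) * (y⁻¹ * y) = y⁻¹ * y := inv_mul_idem y
      have hiE' : y⁻¹ * y ∈ E := hEmem.mpr hey
      set i' : {e : S // e ∈ E} := ⟨y⁻¹ * y, hiE'⟩ with hi'def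
      have hf0id' : (y * y⁻¹) * (y * y⁻¹) = y * y⁻¹ := mul_inv_idem y
      have hf0Ee' : y * y⁻¹ ∈ Ee i'.1 := by
        apply (hEe i'.1 (y * y⁻¹)).mpr
        refine ⟨hf0id', y⁻¹, ?_, ?_⟩
        · rw [ISG.inv_inv]
        · rw [ISG.inv_inv]
      have hB : ¬ ((y * y⁻¹) * (x * x⁻¹) = y * y⁻¹) := by
        intro hB'
        have hcomm : (x * x⁻¹) * (y * y⁻¹) = (y * y⁻¹) * (x * x⁻¹) :=
          idem_comm hf0id hf0id'
        have heq2 : x * x⁻¹ = y * y⁻¹ := by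
          calc x * x⁻¹ = (x * x⁻¹) * (y * y⁻¹) := hA.symm
          _ = (y * y⁻¹) * (x * x⁻¹) := hcomm
          _ = y * y⁻¹ := hB'
        have : x = y := by
          rw [hx_eq, heq2, mim]
        exact hxy this
      obtain ⟨q1⟩ := nQ i'
      have hvy2 := gfun_pos i' y (q1, ⟨y * y⁻¹, hf0Ee'⟩) hf0id'
      have hvx2 := gfun_neg i' x (q1, ⟨y * y⁻¹, hf0Ee'⟩) hB
      have hcompeq' : gfun i' x (q1, ⟨y * y⁻¹, hf0Ee'⟩) = gfun i' y (q1, ⟨y * y⁻¹, hf0Ee'⟩) := by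
        have := congrFun hfeq i'
        have h2 : (g i' x).1 = (g i' y).1 := congrArg Subtype.val this
        exact congrFun h2 _
      rw [hvy2, hvx2] at hcompeq'
      exact absurd hcompeq' (by simp)
    · -- x defined, y not defined at (q, x x⁻¹)
      obtain ⟨q0⟩ := nQ i
      have hvx := gfun_pos i x (q0, ⟨x * x⁻¹, hf0Ee⟩) h1x
      have hvy := gfun_neg i y (q0, ⟨x * x⁻¹, hf0Ee⟩) hA
      have hco := hcompeq (q0, ⟨x * x⁻¹, hf0Ee⟩)
      rw [hvx, hvy] at hco
      exact absurd hco (by simp)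
  -- package into a `Type 0` inverse semigroup
  obtain ⟨F, iF, fF, φ, hφinj, hφmul⟩ :=
    exists_package (∀ i : {e : S // e ∈ E}, PB (Xi i))
  refine ⟨F, iF, fF, fun s => φ (f' s), ?_, ?_⟩
  · intro x hx y hy hxy
    exact hinj hx hy (hφinj hxy)
  · intro x hx y hy hxy
    show φ (f' (x * y)) = φ (f' x) * φ (f' y)
    rw [hom x hx y hy hxy, hφmul]
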